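/- Let d ≥ 1, let A ⊆ ℝ^d be a bounded Borel set whose topological boundary has Lebesgue measure zero, let Φ ⊆ ℝ^d be locally finite, let h : Φ → ℝ be bounded, and let c ∈ ℝ. Assume: (i) for every compactly supported C¹ function ζ : ℝ^d → ℝ, ε^d Σ_{z ∈ Φ ∩ ε^{-1}A} h(z) ζ(εz) → c ∫_A ζ(x) dx as ε → 0; (ii) limsup_{ε → 0} ε^d Σ_{z ∈ Φ ∩ ε^{-1}A} |h(z)| < ∞; (iii) for each ε ∈ (0,1], I^ε ⊆ Φ ∩ ε^{-1}A with ε^d · #((Φ ∩ ε^{-1}A) \ I^ε) → 0; (iv) there are constants 0 < C₁ ≤ C₂ and radii r^ε_z with C₁ ε ≤ r^ε_z ≤ C₂ ε for all z ∈ I^ε, such that the open balls U^ε_z := U_{r^ε_z}(εz), z ∈ I^ε, are pairwise disjoint. Then for every compactly supported C¹ function ζ : ℝ^d → ℝ, ε^d Σ_{z ∈ I^ε} h(z) · (1 / H^{d−1}(∂U^ε_z)) ∫_{∂U^ε_z} ζ dH^{d−1} → c ∫_A ζ(x) dx as ε → 0. -/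

import Mathlib

open MeasureTheory Filter Topology Metric Set
open scoped ENNReal NNReal Pointwise

namespace Stmt7Aux


lemma norm_sq_eq {ι : Type*} [Fintype ι] (y : EuclideanSpace ℝ ι) :
    ‖y‖ ^ 2 = ∑ i, (y i) ^ 2 := by
  rw [EuclideanSpace.norm_eq, Real.sq_sqrt (by positivity)]
  simp [Real.norm_eq_abs, sq_abs]

lemma hm_lt_top {ι : Type*} [Fintype ι] {s : Set (EuclideanSpace ℝ ι)}
    (hs : Bornology.IsBounded s) : μH[(Fintype.card ι : ℝ)] s ≠ ⊤ := by
  have hA := PiLp.antilipschitzWith_ofLp 2 (fun _ : ι => ℝ)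
  have h1 := hA.le_hausdorffMeasure_image (d := (Fintype.card ι : ℝ)) (by positivity) s
  rw [hausdorffMeasure_pi_real] at h1
  have hb : Bornology.IsBounded ((WithLp.equiv 2 (∀ _ : ι, ℝ)) '' s) :=
    (PiLp.lipschitzWith_ofLp 2 _).isBounded_image hs
  have hv : volume ((WithLp.equiv 2 (∀ _ : ι, ℝ)) '' s) < ⊤ := hb.measure_lt_top
  refine ne_of_lt (lt_of_le_of_lt h1 ?_)
  exact ENNReal.mul_lt_top
    (ENNReal.rpow_lt_top_of_nonneg (by positivity) ENNReal.coe_ne_top) hv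

lemma hm_closedBall_ne_zero {ι : Type*} [Fintype ι] (x : EuclideanSpace ℝ ι) {ρ : ℝ}
    (hρ : 0 < ρ) : μH[(Fintype.card ι : ℝ)] (closedBall x ρ) ≠ 0 := by
  have hL := (PiLp.lipschitzWith_ofLp 2 (fun _ : ι => ℝ)).hausdorffMeasure_image_le
      (d := (Fintype.card ι : ℝ)) (by positivity) (closedBall x ρ)
  rw [hausdorffMeasure_pi_real] at hL
  intro hcon
  rw [hcon, mul_zero] at hL
  have hcoe : ⇑(PiLp.continuousLinearEquiv 2 ℝ (fun _ : ι => ℝ)) = ⇑(WithLp.equiv 2 (∀ _ : ι, ℝ)) := rfl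
  have hopen : IsOpen ((WithLp.equiv 2 (∀ _ : ι, ℝ)) '' (ball x ρ)) := by
    rw [← hcoe]
    exact (PiLp.continuousLinearEquiv 2 ℝ (fun _ : ι => ℝ)).toHomeomorph.isOpen_image.2
      isOpen_ball
  have hne : ((WithLp.equiv 2 (∀ _ : ι, ℝ)) '' (ball x ρ)).Nonempty :=
    ⟨_, ⟨x, mem_ball_self hρ, rfl⟩⟩
  have hpos := hopen.measure_pos volume hne
  have hle : volume ((WithLp.equiv 2 (∀ _ : ι, ℝ)) '' (ball x ρ)) ≤
      volume ((WithLp.equiv 2 (∀ _ : ι, ℝ)) '' (closedBall x ρ)) :=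
    measure_mono (image_mono ball_subset_closedBall)
  exact hpos.ne' (le_antisymm (hle.trans hL) zero_le')


set_option maxHeartbeats 1000000 in
lemma sqrt_est {d : ℕ} (hd : 1 ≤ d) {ρ a b : ℝ} (hρ : 0 < ρ)
    (ha0 : 0 ≤ a) (hb0 : 0 ≤ b)
    (ha : a ^ 2 ≤ ρ ^ 2 - ρ ^ 2 / d) (hb : b ^ 2 ≤ ρ ^ 2 - ρ ^ 2 / d) :
    |Real.sqrt (ρ ^ 2 - a ^ 2) - Real.sqrt (ρ ^ 2 - b ^ 2)| ≤ Real.sqrt d * |a - b| := by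
  have hd0 : (0:ℝ) < d := by
    have : (1:ℝ) ≤ (d:ℝ) := by exact_mod_cast hd
    linarith
  have hfield : (d : ℝ) * (ρ ^ 2 / d) = ρ ^ 2 := by field_simp
  have hdiv : 0 < ρ ^ 2 / d := by positivity
  set A := Real.sqrt (ρ ^ 2 - a ^ 2) with hAdef
  set B := Real.sqrt (ρ ^ 2 - b ^ 2) with hBdef
  set s := Real.sqrt d with hsdef
  have hs : s ^ 2 = d := Real.sq_sqrt hd0.le
  have hs0 : 0 < s := Real.sqrt_pos.2 hd0
  have hA0 : 0 ≤ A := Real.sqrt_nonneg _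
  have hB0 : 0 ≤ B := Real.sqrt_nonneg _
  have hA2 : A ^ 2 = ρ ^ 2 - a ^ 2 := Real.sq_sqrt (by nlinarith)
  have hB2 : B ^ 2 = ρ ^ 2 - b ^ 2 := Real.sq_sqrt (by nlinarith)
  have hsA2 : ρ ^ 2 ≤ (s * A) ^ 2 := by
    have h1 : 0 ≤ (d:ℝ) * (ρ ^ 2 - ρ ^ 2 / d - a ^ 2) :=
      mul_nonneg hd0.le (by linarith)
    nlinarith [h1]
  have hsB2 : ρ ^ 2 ≤ (s * B) ^ 2 := by
    have h1 : 0 ≤ (d:ℝ) * (ρ ^ 2 - ρ ^ 2 / d - b ^ 2) :=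
      mul_nonneg hd0.le (by linarith)
    nlinarith [h1]
  have hsA : ρ ≤ s * A := by
    have h2 := Real.sqrt_le_sqrt hsA2
    rwa [Real.sqrt_sq hρ.le, Real.sqrt_sq (mul_nonneg hs0.le hA0)] at h2
  have hsB : ρ ≤ s * B := by
    have h2 := Real.sqrt_le_sqrt hsB2
    rwa [Real.sqrt_sq hρ.le, Real.sqrt_sq (mul_nonneg hs0.le hB0)] at h2
  have haρ : a ≤ ρ := by
    have h2 : a ^ 2 ≤ ρ ^ 2 := by linarith
    have h3 := Real.sqrt_le_sqrt h2
    rwa [Real.sqrt_sq ha0, Real.sqrt_sq hρ.le] at h3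
  have hbρ : b ≤ ρ := by
    have h2 : b ^ 2 ≤ ρ ^ 2 := by linarith
    have h3 := Real.sqrt_le_sqrt h2
    rwa [Real.sqrt_sq hb0, Real.sqrt_sq hρ.le] at h3
  have key : (A - B) * (A + B) = (b - a) * (b + a) := by
    have : A ^ 2 - B ^ 2 = b ^ 2 - a ^ 2 := by rw [hA2, hB2]; ring
    nlinarith [this]
  set t := |a - b| with htdef
  have ht0 : 0 ≤ t := abs_nonneg _
  have ht1 : a - b ≤ t := le_abs_self _
  have ht2 : b - a ≤ t := by rw [htdef, abs_sub_comm]; exact le_abs_self _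
  have hABpos : 0 < A + B := by nlinarith
  rw [abs_sub_le_iff]
  constructor
  · nlinarith [mul_nonneg ht0 (sub_nonneg.2 hsA), mul_nonneg ht0 (sub_nonneg.2 hsB),
      mul_nonneg (sub_nonneg.2 ht2) (by linarith : (0:ℝ) ≤ a + b),
      mul_nonneg ht0 (by linarith : (0:ℝ) ≤ 2 * ρ - (a + b)), key]
  · nlinarith [mul_nonneg ht0 (sub_nonneg.2 hsA), mul_nonneg ht0 (sub_nonneg.2 hsB),
      mul_nonneg (sub_nonneg.2 ht1) (by linarith : (0:ℝ) ≤ a + b),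
      mul_nonneg ht0 (by linarith : (0:ℝ) ≤ 2 * ρ - (a + b)), key]

lemma sum_split {d : ℕ} (i : Fin d) (f : Fin d → ℝ) :
    (∑ j : {j : Fin d // j ≠ i}, f j.1) + f i = ∑ j, f j := by
  classical
  rw [← Finset.sum_erase_add Finset.univ f (Finset.mem_univ i)]
  congr 1
  exact (Finset.sum_subtype (Finset.univ.erase i) (fun j => by simp) f).symm

variable {d : ℕ}

variable {d : ℕ}

noncomputable def projA (x : EuclideanSpace ℝ (Fin d)) (i : Fin d) (y : EuclideanSpace ℝ (Fin d)) :
    EuclideanSpace ℝ {j : Fin d // j ≠ i} :=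
  (WithLp.equiv 2 _).symm (fun j => y j.1 - x j.1)

noncomputable def gmap (x : EuclideanSpace ℝ (Fin d)) (i : Fin d) (σ ρ : ℝ)
    (v : EuclideanSpace ℝ {j : Fin d // j ≠ i}) : EuclideanSpace ℝ (Fin d) :=
  x + (WithLp.equiv 2 _).symm
    (fun j => if h : j = i then σ * Real.sqrt (ρ ^ 2 - ‖v‖ ^ 2) else v ⟨j, h⟩)

@[simp] lemma projA_apply (x : EuclideanSpace ℝ (Fin d)) (i : Fin d)
    (y : EuclideanSpace ℝ (Fin d)) (j : {j : Fin d // j ≠ i}) :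
    projA x i y j = y j.1 - x j.1 := rfl

@[simp] lemma gmap_apply (x : EuclideanSpace ℝ (Fin d)) (i : Fin d) (σ ρ : ℝ)
    (v : EuclideanSpace ℝ {j : Fin d // j ≠ i}) (j : Fin d) :
    gmap x i σ ρ v j =
      x j + if h : j = i then σ * Real.sqrt (ρ ^ 2 - ‖v‖ ^ 2) else v ⟨j, h⟩ := rfl

lemma projA_lip (x : EuclideanSpace ℝ (Fin d)) (i : Fin d) :
    LipschitzWith 1 (projA x i) := by
  apply LipschitzWith.of_dist_le_mul
  intro y z
  rw [NNReal.coe_one, one_mul, EuclideanSpace.dist_eq, EuclideanSpace.dist_eq]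
  apply Real.sqrt_le_sqrt
  have h1 : ∀ j : {j : Fin d // j ≠ i},
      dist (projA x i y j) (projA x i z j) = dist (y j.1) (z j.1) := by
    intro j; simp [Real.dist_eq, sub_sub_sub_cancel_right]
  calc (∑ j : {j : Fin d // j ≠ i}, dist (projA x i y j) (projA x i z j) ^ 2)
      = ∑ j : {j : Fin d // j ≠ i}, dist (y j.1) (z j.1) ^ 2 := by
        exact Finset.sum_congr rfl (fun j _ => by rw [h1 j])
    _ ≤ ∑ j, dist (y j) (z j) ^ 2 := by
        rw [← sum_split i (fun j => dist (y j) (z j) ^ 2)]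
        have : 0 ≤ dist (y i) (z i) ^ 2 := sq_nonneg _
        linarith

lemma gmap_lipschitzOn (hd : 1 ≤ d) (x : EuclideanSpace ℝ (Fin d)) (i : Fin d) {σ : ℝ}
    (hσ : σ = 1 ∨ σ = -1) {ρ : ℝ} (hρ : 0 < ρ) :
    LipschitzOnWith (Real.toNNReal (Real.sqrt (d + 1))) (gmap x i σ ρ)
      {v : EuclideanSpace ℝ {j : Fin d // j ≠ i} | ‖v‖ ^ 2 ≤ ρ ^ 2 - ρ ^ 2 / d} := by
  rw [lipschitzOnWith_iff_dist_le_mul]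
  intro u hu v hv
  have hσ2 : |σ| = 1 := by rcases hσ with h | h <;> simp [h]
  have hdist : 0 ≤ dist u v := dist_nonneg
  have hsd : (0:ℝ) ≤ Real.sqrt (d + 1) := Real.sqrt_nonneg _
  rw [Real.coe_toNNReal _ hsd]
  -- the i-th coordinate estimate
  have hi : dist (gmap x i σ ρ u i) (gmap x i σ ρ v i) ≤ Real.sqrt d * dist u v := by
    have h1 : gmap x i σ ρ u i = x i + σ * Real.sqrt (ρ ^ 2 - ‖u‖ ^ 2) := by simp
    have h2 : gmap x i σ ρ v i = x i + σ * Real.sqrt (ρ ^ 2 - ‖v‖ ^ 2) := by simp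
    rw [h1, h2, Real.dist_eq]
    have h3 : x i + σ * Real.sqrt (ρ ^ 2 - ‖u‖ ^ 2) - (x i + σ * Real.sqrt (ρ ^ 2 - ‖v‖ ^ 2))
        = σ * (Real.sqrt (ρ ^ 2 - ‖u‖ ^ 2) - Real.sqrt (ρ ^ 2 - ‖v‖ ^ 2)) := by ring
    rw [h3, abs_mul, hσ2, one_mul]
    calc |Real.sqrt (ρ ^ 2 - ‖u‖ ^ 2) - Real.sqrt (ρ ^ 2 - ‖v‖ ^ 2)|
        ≤ Real.sqrt d * |‖u‖ - ‖v‖| :=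
          sqrt_est hd hρ (norm_nonneg _) (norm_nonneg _) hu hv
      _ ≤ Real.sqrt d * dist u v := by
          apply mul_le_mul_of_nonneg_left _ (Real.sqrt_nonneg _)
          rw [dist_eq_norm]
          exact abs_norm_sub_norm_le _ _
  -- the other coordinates
  have hoff : ∀ j : {j : Fin d // j ≠ i},
      dist (gmap x i σ ρ u j.1) (gmap x i σ ρ v j.1) = dist (u j) (v j) := by
    intro j
    have h1 : gmap x i σ ρ u j.1 = x j.1 + u j := by simp [j.2]
    have h2 : gmap x i σ ρ v j.1 = x j.1 + v j := by simp [j.2]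
    rw [h1, h2, Real.dist_eq, Real.dist_eq]
    congr 1; ring
  have hsq : dist (gmap x i σ ρ u) (gmap x i σ ρ v) ^ 2 ≤ (d + 1) * dist u v ^ 2 := by
    rw [EuclideanSpace.dist_eq, Real.sq_sqrt (by positivity)]
    rw [← sum_split i (fun j => dist (gmap x i σ ρ u j) (gmap x i σ ρ v j) ^ 2)]
    have hA : (∑ j : {j : Fin d // j ≠ i},
        dist (gmap x i σ ρ u j.1) (gmap x i σ ρ v j.1) ^ 2) = dist u v ^ 2 := by
      rw [EuclideanSpace.dist_eq, Real.sq_sqrt (by positivity)]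
      exact Finset.sum_congr rfl (fun j _ => by rw [hoff j])
    rw [hA]
    have hB : dist (gmap x i σ ρ u i) (gmap x i σ ρ v i) ^ 2 ≤ d * dist u v ^ 2 := by
      have := hi
      have h4 : (Real.sqrt d * dist u v) ^ 2 = d * dist u v ^ 2 := by
        rw [mul_pow, Real.sq_sqrt (by positivity)]
      nlinarith [dist_nonneg (x := gmap x i σ ρ u i) (y := gmap x i σ ρ v i)]
    linarith
  calc dist (gmap x i σ ρ u) (gmap x i σ ρ v)
      = Real.sqrt (dist (gmap x i σ ρ u) (gmap x i σ ρ v) ^ 2) :=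
        (Real.sqrt_sq dist_nonneg).symm
    _ ≤ Real.sqrt ((d + 1) * dist u v ^ 2) := Real.sqrt_le_sqrt hsq
    _ = Real.sqrt (d + 1) * dist u v := by
        rw [Real.sqrt_mul (by positivity), Real.sqrt_sq dist_nonneg]


lemma sphere_subset_cover (hd : 1 ≤ d) (x : EuclideanSpace ℝ (Fin d)) {ρ : ℝ} (hρ : 0 < ρ) :
    Metric.sphere x ρ ⊆ ⋃ p : Fin d × Bool,
      gmap x p.1 (if p.2 then (1:ℝ) else -1) ρ ''
        {v : EuclideanSpace ℝ {j : Fin d // j ≠ p.1} | ‖v‖ ^ 2 ≤ ρ ^ 2 - ρ ^ 2 / d} := by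
  intro y hy
  have hd0 : (0:ℝ) < d := by
    have : (1:ℝ) ≤ (d:ℝ) := by exact_mod_cast hd
    linarith
  have hfield : (d:ℝ) * (ρ ^ 2 / d) = ρ ^ 2 := by field_simp
  set w : Fin d → ℝ := fun j => y j - x j with hw
  have hdist : dist y x = ρ := mem_sphere.1 hy
  have hsum : ∑ j, w j ^ 2 = ρ ^ 2 := by
    have h1 := congrArg (· ^ 2) hdist
    simp only [EuclideanSpace.dist_eq] at h1
    rw [Real.sq_sqrt (by positivity)] at h1
    simpa [Real.dist_eq, sq_abs] using h1
  have hex : ∃ i, ρ ^ 2 / d ≤ w i ^ 2 := by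
    by_contra hcon
    push_neg at hcon
    haveI : Nonempty (Fin d) := ⟨⟨0, hd⟩⟩
    have h2 : (∑ j, w j ^ 2) < ∑ _j : Fin d, ρ ^ 2 / d :=
      Finset.sum_lt_sum_of_nonempty Finset.univ_nonempty (fun j _ => hcon j)
    rw [Finset.sum_const, Finset.card_univ, Fintype.card_fin, nsmul_eq_mul] at h2
    rw [hsum, hfield] at h2
    exact lt_irrefl _ h2
  obtain ⟨i, hi⟩ := hex
  have hwle : w i ^ 2 ≤ ρ ^ 2 := by
    rw [← hsum]
    have : ∀ j ∈ Finset.univ, 0 ≤ w j ^ 2 := fun j _ => sq_nonneg _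
    exact Finset.single_le_sum this (Finset.mem_univ i)
  set v : EuclideanSpace ℝ {j : Fin d // j ≠ i} := projA x i y with hv
  have hvnorm : ‖v‖ ^ 2 = ρ ^ 2 - w i ^ 2 := by
    rw [norm_sq_eq]
    have h3 : (∑ j : {j : Fin d // j ≠ i}, (v j) ^ 2) = ∑ j : {j : Fin d // j ≠ i}, w j.1 ^ 2 :=
      Finset.sum_congr rfl (fun j _ => by simp [hv, hw])
    rw [h3]
    have h4 := sum_split i (fun j => w j ^ 2)
    linarith [hsum, h4]
  have hvD : ‖v‖ ^ 2 ≤ ρ ^ 2 - ρ ^ 2 / d := by rw [hvnorm]; linarith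
  refine mem_iUnion.2 ⟨(i, decide (0 ≤ w i)), ⟨v, hvD, ?_⟩⟩
  have hsqrt : Real.sqrt (ρ ^ 2 - ‖v‖ ^ 2) = |w i| := by
    rw [hvnorm]
    have : ρ ^ 2 - (ρ ^ 2 - w i ^ 2) = w i ^ 2 := by ring
    rw [this, Real.sqrt_sq_eq_abs]
  ext j
  by_cases hj : j = i
  · subst hj
    simp only [gmap_apply, dif_pos rfl, hsqrt]
    by_cases h0 : 0 ≤ w j
    · have h0' : x j ≤ y j := by simpa [hw] using h0
      rw [abs_of_nonneg h0]
      simp [h0, h0', hw]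
    · have h0' : ¬ x j ≤ y j := by simpa [hw] using h0
      rw [abs_of_neg (lt_of_not_ge h0)]
      simp [h0, h0', hw]
  · simp [gmap_apply, dif_neg hj, hv, hw]

lemma closedBall_subset_proj (hd : 1 ≤ d) (x : EuclideanSpace ℝ (Fin d)) {ρ : ℝ}
    (hρ : 0 < ρ) (i : Fin d) :
    Metric.closedBall (0 : EuclideanSpace ℝ {j : Fin d // j ≠ i}) ρ ⊆
      projA x i '' Metric.sphere x ρ := by
  intro w hw
  have hwρ : ‖w‖ ≤ ρ := by simpa using hw
  have hw2 : ‖w‖ ^ 2 ≤ ρ ^ 2 := by nlinarith [norm_nonneg w]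
  refine ⟨gmap x i 1 ρ w, ?_, ?_⟩
  · rw [mem_sphere, EuclideanSpace.dist_eq]
    have hAi : dist (gmap x i 1 ρ w i) (x i) ^ 2 = ρ ^ 2 - ‖w‖ ^ 2 := by
      have h1 : gmap x i 1 ρ w i = x i + Real.sqrt (ρ ^ 2 - ‖w‖ ^ 2) := by simp
      rw [h1, Real.dist_eq, add_sub_cancel_left, sq_abs, Real.sq_sqrt (by linarith)]
    have hAj : ∀ j : {j : Fin d // j ≠ i},
        dist (gmap x i 1 ρ w j.1) (x j.1) ^ 2 = w j ^ 2 := by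
      intro j
      have h1 : gmap x i 1 ρ w j.1 = x j.1 + w j := by simp [j.2]
      rw [h1, Real.dist_eq, add_sub_cancel_left, sq_abs]
    have hsum2 : (∑ j, dist (gmap x i 1 ρ w j) (x j) ^ 2) = ρ ^ 2 := by
      rw [← sum_split i (fun j => dist (gmap x i 1 ρ w j) (x j) ^ 2)]
      have hA : (∑ j : {j : Fin d // j ≠ i}, dist (gmap x i 1 ρ w j.1) (x j.1) ^ 2)
          = ‖w‖ ^ 2 := by
        rw [norm_sq_eq]
        exact Finset.sum_congr rfl (fun j _ => hAj j)
      rw [hA, hAi]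
      ring
    rw [hsum2, Real.sqrt_sq hρ.le]
  · ext j
    simp only [projA_apply, gmap_apply, dif_neg j.2, add_sub_cancel_left]


lemma card_ne (i : Fin d) (hd : 1 ≤ d) :
    (Fintype.card {j : Fin d // j ≠ i} : ℝ) = (d : ℝ) - 1 := by
  classical
  have h1 : Fintype.card {j : Fin d // j ≠ i} = d - 1 := by
    simp [Fintype.card_subtype_compl, Fintype.card_subtype_eq]
  rw [h1, Nat.cast_sub hd, Nat.cast_one]

lemma sphere_hm (hd : 1 ≤ d) (x : EuclideanSpace ℝ (Fin d)) {ρ : ℝ} (hρ : 0 < ρ) :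
    μH[(d:ℝ)-1] (Metric.sphere x ρ) ≠ 0 ∧ μH[(d:ℝ)-1] (Metric.sphere x ρ) ≠ ⊤ := by
  have hexp : (0:ℝ) ≤ (d:ℝ) - 1 := by
    have : (1:ℝ) ≤ (d:ℝ) := by exact_mod_cast hd
    linarith
  constructor
  · -- positivity
    intro hcon
    set i₀ : Fin d := ⟨0, hd⟩
    have h1 : μH[(d:ℝ)-1] (Metric.closedBall (0 : EuclideanSpace ℝ {j : Fin d // j ≠ i₀}) ρ)
        ≤ μH[(d:ℝ)-1] (projA x i₀ '' Metric.sphere x ρ) :=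
      measure_mono (closedBall_subset_proj hd x hρ i₀)
    have h2 := (projA_lip x i₀).hausdorffMeasure_image_le hexp (Metric.sphere x ρ)
    rw [hcon, mul_zero] at h2
    have h3 : μH[(d:ℝ)-1] (Metric.closedBall (0 : EuclideanSpace ℝ {j : Fin d // j ≠ i₀}) ρ)
        = 0 := le_antisymm (h1.trans h2) zero_le'
    have h4 := hm_closedBall_ne_zero (0 : EuclideanSpace ℝ {j : Fin d // j ≠ i₀}) hρ
    rw [card_ne i₀ hd] at h4
    exact h4 h3
  · -- finiteness
    have hcover := sphere_subset_cover hd x hρ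
    refine ne_of_lt (lt_of_le_of_lt (measure_mono hcover) ?_)
    refine lt_of_le_of_lt (measure_iUnion_le _) ?_
    rw [tsum_fintype]
    refine ENNReal.sum_lt_top.2 (fun p _ => ?_)
    have hσ : (if p.2 then (1:ℝ) else -1) = 1 ∨ (if p.2 then (1:ℝ) else -1) = -1 := by
      by_cases hb : p.2 <;> simp [hb]
    have hlip := (gmap_lipschitzOn hd x p.1 hσ hρ).hausdorffMeasure_image_le hexp
    refine lt_of_le_of_lt hlip ?_
    refine ENNReal.mul_lt_top (ENNReal.rpow_lt_top_of_nonneg hexp ENNReal.coe_ne_top) ?_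
    have hDsub : {v : EuclideanSpace ℝ {j : Fin d // j ≠ p.1} | ‖v‖ ^ 2 ≤ ρ ^ 2 - ρ ^ 2 / d}
        ⊆ Metric.closedBall 0 ρ := by
      intro v hv
      simp only [mem_setOf_eq] at hv
      have h5 : ‖v‖ ^ 2 ≤ ρ ^ 2 := by
        have : (0:ℝ) ≤ ρ ^ 2 / d := by positivity
        linarith
      have h6 : ‖v‖ ≤ ρ := by nlinarith [norm_nonneg v]
      simpa using h6
    have hbdd : Bornology.IsBounded
        {v : EuclideanSpace ℝ {j : Fin d // j ≠ p.1} | ‖v‖ ^ 2 ≤ ρ ^ 2 - ρ ^ 2 / d} :=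
      Metric.isBounded_closedBall.subset hDsub
    have h7 := hm_lt_top hbdd
    rw [card_ne p.1 hd] at h7
    exact lt_top_iff_ne_top.2 h7


lemma avg_est (hd : 1 ≤ d) (x₀ : EuclideanSpace ℝ (Fin d)) {ρ : ℝ} (hρ : 0 < ρ)
    (ζ : EuclideanSpace ℝ (Fin d) → ℝ) (hζ : Continuous ζ) {L : ℝ≥0}
    (hLip : LipschitzWith L ζ) :
    |(μH[(d:ℝ)-1] (Metric.sphere x₀ ρ)).toReal⁻¹ *
        ∫ y in Metric.sphere x₀ ρ, ζ y ∂(μH[(d:ℝ)-1]) - ζ x₀| ≤ (L : ℝ) * ρ := by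
  obtain ⟨h0, htop⟩ := sphere_hm hd x₀ hρ
  set μ : Measure (EuclideanSpace ℝ (Fin d)) := μH[(d:ℝ)-1] with hμ
  set S := Metric.sphere x₀ ρ with hS
  have hm : 0 < (μ S).toReal := ENNReal.toReal_pos h0 htop
  have hSmeas : MeasurableSet S := (isClosed_sphere.measurableSet)
  have hμS : μ S < ⊤ := lt_top_iff_ne_top.2 htop
  have hbd : ∀ y ∈ S, ‖ζ y - ζ x₀‖ ≤ (L : ℝ) * ρ := by
    intro y hy
    calc ‖ζ y - ζ x₀‖ = dist (ζ y) (ζ x₀) := by rw [Real.norm_eq_abs, Real.dist_eq]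
    _ ≤ L * dist y x₀ := hLip.dist_le_mul _ _
    _ = L * ρ := by rw [mem_sphere.1 hy]
  have hint : IntegrableOn ζ S μ := by
    have hconst : IntegrableOn (fun _ => |ζ x₀| + (L:ℝ) * ρ) S μ :=
      integrableOn_const hμS.ne
    apply Integrable.mono' hconst hζ.aestronglyMeasurable.restrict
    refine (ae_restrict_iff' hSmeas).2 (Filter.Eventually.of_forall fun y hy => ?_)
    have h1 := hbd y hy
    have h2 : |ζ y| - |ζ x₀| ≤ |ζ y - ζ x₀| := abs_sub_abs_le_abs_sub _ _
    rw [Real.norm_eq_abs] at h1 ⊢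
    linarith
  have hsub : ∫ y in S, (ζ y - ζ x₀) ∂μ = (∫ y in S, ζ y ∂μ) - (μ S).toReal * ζ x₀ := by
    rw [integral_sub hint (integrableOn_const hμS.ne), setIntegral_const,
      smul_eq_mul, measureReal_def]
  have hbound : ‖∫ y in S, (ζ y - ζ x₀) ∂μ‖ ≤ ((L:ℝ) * ρ) * (μ S).toReal :=
    norm_setIntegral_le_of_norm_le_const hμS hbd
  rw [hsub, Real.norm_eq_abs] at hbound
  have hmne : (μ S).toReal ≠ 0 := hm.ne'
  have heq : (μ S).toReal⁻¹ * ∫ y in S, ζ y ∂μ - ζ x₀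
      = (μ S).toReal⁻¹ * ((∫ y in S, ζ y ∂μ) - (μ S).toReal * ζ x₀) := by
    field_simp
  rw [heq, abs_mul, abs_inv, abs_of_pos hm]
  rw [inv_mul_le_iff₀ hm]
  calc |(∫ y in S, ζ y ∂μ) - (μ S).toReal * ζ x₀| ≤ ((L:ℝ) * ρ) * (μ S).toReal := hbound
  _ = (μ S).toReal * ((L:ℝ) * ρ) := by ring



end Stmt7Aux

open Stmt7Aux in
theorem stmt7 {d : ℕ} (hd : 1 ≤ d)
    (A : Set (EuclideanSpace ℝ (Fin d))) (hAmeas : MeasurableSet A)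
    (hAbdd : Bornology.IsBounded A) (hAfr : volume (frontier A) = 0)
    (Φ : Set (EuclideanSpace ℝ (Fin d)))
    -- Φ is locally finite:
    (hΦ : ∀ B : Set (EuclideanSpace ℝ (Fin d)), Bornology.IsBounded B → (Φ ∩ B).Finite)
    -- h is bounded:
    (h : EuclideanSpace ℝ (Fin d) → ℝ) (hhbdd : ∃ Ch : ℝ, ∀ z ∈ Φ, |h z| ≤ Ch)
    (c : ℝ)
    -- (i) convergence of the empirical sums against C¹ test functions:
    (hi : ∀ ζ : EuclideanSpace ℝ (Fin d) → ℝ, ContDiff ℝ 1 ζ → HasCompactSupport ζ →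
      Tendsto (fun ε : ℝ => ε ^ d * ∑ᶠ z ∈ Φ ∩ ε⁻¹ • A, h z * ζ (ε • z)) (𝓝[>] (0:ℝ))
        (𝓝 (c * ∫ x in A, ζ x)))
    -- (ii) the sums of |h| stay bounded as ε → 0:
    (hii : ∃ C : ℝ, ∀ᶠ ε in 𝓝[>] (0:ℝ), ε ^ d * ∑ᶠ z ∈ Φ ∩ ε⁻¹ • A, |h z| ≤ C)
    -- (iii) the sets I^ε exhaust Φ ∩ ε⁻¹A asymptotically:
    (I : ℝ → Set (EuclideanSpace ℝ (Fin d)))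
    (hI : ∀ ε ∈ Set.Ioc (0:ℝ) 1, I ε ⊆ Φ ∩ ε⁻¹ • A)
    (hiii : Tendsto (fun ε : ℝ => ε ^ d * (((Φ ∩ ε⁻¹ • A) \ I ε).ncard : ℝ))
      (𝓝[>] (0:ℝ)) (𝓝 0))
    -- (iv) radii comparable to ε with pairwise disjoint balls:
    (C₁ C₂ : ℝ) (hC₁ : 0 < C₁) (hC₁₂ : C₁ ≤ C₂)
    (r : ℝ → EuclideanSpace ℝ (Fin d) → ℝ)
    (hr : ∀ ε ∈ Set.Ioc (0:ℝ) 1, ∀ z ∈ I ε, C₁ * ε ≤ r ε z ∧ r ε z ≤ C₂ * ε)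
    (hdisj : ∀ ε ∈ Set.Ioc (0:ℝ) 1, ∀ z ∈ I ε, ∀ z' ∈ I ε, z ≠ z' →
      Disjoint (Metric.ball (ε • z) (r ε z)) (Metric.ball (ε • z') (r ε z'))) :
    -- the sphere averages converge against every C¹ test function:
    ∀ ζ : EuclideanSpace ℝ (Fin d) → ℝ, ContDiff ℝ 1 ζ → HasCompactSupport ζ →
      Tendsto (fun ε : ℝ => ε ^ d * ∑ᶠ z ∈ I ε,
          h z * (μH[(d : ℝ) - 1] (Metric.sphere (ε • z) (r ε z))).toReal⁻¹ *
            ∫ x in Metric.sphere (ε • z) (r ε z), ζ x ∂(μH[(d : ℝ) - 1]))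
        (𝓝[>] (0:ℝ)) (𝓝 (c * ∫ x in A, ζ x)) := by
  intro ζ hζ1 hζ2
  classical
  obtain ⟨Ch₀, hCh₀⟩ := hhbdd
  set Ch := max Ch₀ 0 with hChdef
  have hCh : ∀ z ∈ Φ, |h z| ≤ Ch := fun z hz => (hCh₀ z hz).trans (le_max_left _ _)
  have hCh0 : 0 ≤ Ch := le_max_right _ _
  obtain ⟨M₀, hM₀⟩ := hζ2.exists_bound_of_continuous hζ1.continuous
  set M := max M₀ 0 with hMdef
  have hM : ∀ x, |ζ x| ≤ M := fun x => by
    have := hM₀ x; rw [Real.norm_eq_abs] at this; exact this.trans (le_max_left _ _)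
  have hM0 : 0 ≤ M := le_max_right _ _
  obtain ⟨L, hLip⟩ := ContDiff.lipschitzWith_of_hasCompactSupport hζ2 hζ1 one_ne_zero
  obtain ⟨C₀, hC₀⟩ := hii
  set C := max C₀ 0 with hCdef
  have hC : ∀ᶠ ε in 𝓝[>] (0:ℝ), ε ^ d * ∑ᶠ z ∈ Φ ∩ ε⁻¹ • A, |h z| ≤ C :=
    hC₀.mono fun ε hε => hε.trans (le_max_left _ _)
  have hC0 : 0 ≤ C := le_max_right _ _
  have hfin : ∀ ε : ℝ, 0 < ε → (Φ ∩ ε⁻¹ • A).Finite := fun ε hε =>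
    hΦ _ (hAbdd.smul₀ ε⁻¹)
  have hT := hi ζ hζ1 hζ2
  set T : ℝ → ℝ := fun ε => ε ^ d * ∑ᶠ z ∈ Φ ∩ ε⁻¹ • A, h z * ζ (ε • z) with hTdef
  set S : ℝ → ℝ := fun ε : ℝ => ε ^ d * ∑ᶠ z ∈ I ε,
      h z * (μH[(d : ℝ) - 1] (Metric.sphere (ε • z) (r ε z))).toReal⁻¹ *
        ∫ x in Metric.sphere (ε • z) (r ε z), ζ x ∂(μH[(d : ℝ) - 1]) with hSdef
  have hbound : ∀ᶠ ε in 𝓝[>] (0:ℝ), ‖S ε - T ε‖ ≤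
      C * ((L:ℝ) * C₂) * ε + (Ch * M) * (ε ^ d * (((Φ ∩ ε⁻¹ • A) \ I ε).ncard : ℝ)) := by
    filter_upwards [hC, Ioc_mem_nhdsGT (zero_lt_one)] with ε hCε hεIoc
    obtain ⟨hε0, hε1⟩ := hεIoc
    have hfinP : (Φ ∩ ε⁻¹ • A).Finite := hfin ε hε0
    have hIsub := hI ε ⟨hε0, hε1⟩
    have hfinI : (I ε).Finite := hfinP.subset hIsub
    set F := hfinP.toFinset with hFdef
    set G := hfinI.toFinset with hGdef
    have hGF : G ⊆ F := by
      intro z hz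
      simp only [hFdef, hGdef, Set.Finite.mem_toFinset] at hz ⊢
      exact hIsub hz
    have hεd : (0:ℝ) ≤ ε ^ d := by positivity
    set a : EuclideanSpace ℝ (Fin d) → ℝ := fun z =>
      h z * (μH[(d : ℝ) - 1] (Metric.sphere (ε • z) (r ε z))).toReal⁻¹ *
        ∫ x in Metric.sphere (ε • z) (r ε z), ζ x ∂(μH[(d : ℝ) - 1]) with hadef
    set b : EuclideanSpace ℝ (Fin d) → ℝ := fun z => h z * ζ (ε • z) with hbdef
    have hSsum : S ε = ε ^ d * ∑ z ∈ G, a z := by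
      rw [hSdef]
      simp only
      rw [finsum_mem_eq_finite_toFinset_sum _ hfinI]
    have hTsum : T ε = ε ^ d * ∑ z ∈ F, b z := by
      rw [hTdef]
      simp only
      rw [finsum_mem_eq_finite_toFinset_sum _ hfinP]
    have key1 : ∀ z ∈ G, |a z - b z| ≤ |h z| * ((L:ℝ) * (C₂ * ε)) := by
      intro z hz
      have hzI : z ∈ I ε := by simpa [hGdef, Set.Finite.mem_toFinset] using hz
      obtain ⟨hr1, hr2⟩ := hr ε ⟨hε0, hε1⟩ z hzI
      have hρ0 : 0 < r ε z := lt_of_lt_of_le (by positivity) hr1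
      have hest := avg_est hd (ε • z) hρ0 ζ hζ1.continuous hLip
      have hsplit : a z - b z = h z *
          ((μH[(d : ℝ) - 1] (Metric.sphere (ε • z) (r ε z))).toReal⁻¹ *
            (∫ x in Metric.sphere (ε • z) (r ε z), ζ x ∂(μH[(d : ℝ) - 1])) - ζ (ε • z)) := by
        rw [hadef, hbdef]; ring
      rw [hsplit, abs_mul]
      apply mul_le_mul_of_nonneg_left _ (abs_nonneg _)
      calc |(μH[(d : ℝ) - 1] (Metric.sphere (ε • z) (r ε z))).toReal⁻¹ *
            (∫ x in Metric.sphere (ε • z) (r ε z), ζ x ∂(μH[(d : ℝ) - 1])) - ζ (ε • z)|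
          ≤ (L:ℝ) * r ε z := hest
        _ ≤ (L:ℝ) * (C₂ * ε) := by
            apply mul_le_mul_of_nonneg_left _ (NNReal.coe_nonneg L)
            linarith
    have key2 : ∀ z ∈ F \ G, |b z| ≤ Ch * M := by
      intro z hz
      have hzF : z ∈ F := (Finset.mem_sdiff.1 hz).1
      have hzΦ : z ∈ Φ := by
        have : z ∈ Φ ∩ ε⁻¹ • A := by simpa [hFdef, Set.Finite.mem_toFinset] using hzF
        exact this.1
      rw [hbdef]
      simp only
      rw [abs_mul]
      exact mul_le_mul (hCh z hzΦ) (hM _) (abs_nonneg _) hCh0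
    have e1 : S ε - T ε = ε ^ d * ((∑ z ∈ G, (a z - b z)) - ∑ z ∈ F \ G, b z) := by
      rw [hSsum, hTsum, ← Finset.sum_sdiff hGF, Finset.sum_sub_distrib]
      ring
    have e2 : |S ε - T ε| ≤ ε ^ d * ((∑ z ∈ G, |a z - b z|) + ∑ z ∈ F \ G, |b z|) := by
      rw [e1, abs_mul, abs_of_nonneg hεd]
      apply mul_le_mul_of_nonneg_left _ hεd
      calc |(∑ z ∈ G, (a z - b z)) - ∑ z ∈ F \ G, b z|
          ≤ |∑ z ∈ G, (a z - b z)| + |∑ z ∈ F \ G, b z| := abs_sub _ _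
        _ ≤ (∑ z ∈ G, |a z - b z|) + ∑ z ∈ F \ G, |b z| :=
            add_le_add (Finset.abs_sum_le_sum_abs _ _) (Finset.abs_sum_le_sum_abs _ _)
    have e3 : (∑ z ∈ G, |a z - b z|) ≤ (∑ z ∈ G, |h z|) * ((L:ℝ) * (C₂ * ε)) := by
      calc (∑ z ∈ G, |a z - b z|) ≤ ∑ z ∈ G, |h z| * ((L:ℝ) * (C₂ * ε)) :=
            Finset.sum_le_sum key1
        _ = (∑ z ∈ G, |h z|) * ((L:ℝ) * (C₂ * ε)) := (Finset.sum_mul _ _ _).symm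
    have e4 : (∑ z ∈ F \ G, |b z|) ≤ ((F \ G).card : ℝ) * (Ch * M) := by
      calc (∑ z ∈ F \ G, |b z|) ≤ ∑ _z ∈ F \ G, (Ch * M) := Finset.sum_le_sum key2
        _ = ((F \ G).card : ℝ) * (Ch * M) := by
            rw [Finset.sum_const, nsmul_eq_mul]
    have e5 : ε ^ d * (∑ z ∈ G, |h z|) ≤ C := by
      have h1 : (∑ z ∈ G, |h z|) ≤ ∑ z ∈ F, |h z| :=
        Finset.sum_le_sum_of_subset_of_nonneg hGF (fun z _ _ => abs_nonneg _)
      rw [finsum_mem_eq_finite_toFinset_sum (fun z => |h z|) hfinP] at hCε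
      calc ε ^ d * (∑ z ∈ G, |h z|) ≤ ε ^ d * (∑ z ∈ F, |h z|) :=
            mul_le_mul_of_nonneg_left h1 hεd
        _ ≤ C := hCε
    have e6 : (((Φ ∩ ε⁻¹ • A) \ I ε).ncard : ℝ) = ((F \ G).card : ℝ) := by
      congr 1
      rw [← Set.ncard_coe_finset (F \ G), Finset.coe_sdiff, hFdef, hGdef,
        Set.Finite.coe_toFinset, Set.Finite.coe_toFinset]
    have hsumG0 : 0 ≤ ∑ z ∈ G, |h z| := Finset.sum_nonneg (fun z _ => abs_nonneg _)
    rw [Real.norm_eq_abs]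
    calc |S ε - T ε| ≤ ε ^ d * ((∑ z ∈ G, |a z - b z|) + ∑ z ∈ F \ G, |b z|) := e2
      _ ≤ ε ^ d * ((∑ z ∈ G, |h z|) * ((L:ℝ) * (C₂ * ε)) + ((F \ G).card : ℝ) * (Ch * M)) :=
          mul_le_mul_of_nonneg_left (add_le_add e3 e4) hεd
      _ = (ε ^ d * (∑ z ∈ G, |h z|)) * ((L:ℝ) * C₂) * ε
            + (Ch * M) * (ε ^ d * ((F \ G).card : ℝ)) := by ring
      _ ≤ C * ((L:ℝ) * C₂) * ε + (Ch * M) * (ε ^ d * (((Φ ∩ ε⁻¹ • A) \ I ε).ncard : ℝ)) := by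
          rw [e6]
          apply add_le_add _ le_rfl
          apply mul_le_mul_of_nonneg_right _ hε0.le
          apply mul_le_mul_of_nonneg_right e5 (mul_nonneg (NNReal.coe_nonneg L) (hC₁.le.trans hC₁₂))
  have hg1 : Tendsto (fun ε : ℝ => C * ((L:ℝ) * C₂) * ε) (𝓝[>] (0:ℝ)) (𝓝 0) := by
    have h1 : Tendsto (fun ε : ℝ => C * ((L:ℝ) * C₂) * ε) (𝓝 (0:ℝ))
        (𝓝 (C * ((L:ℝ) * C₂) * 0)) := (continuous_const.mul continuous_id).tendsto 0
    rw [mul_zero] at h1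
    exact h1.mono_left nhdsWithin_le_nhds
  have hg2 : Tendsto (fun ε : ℝ =>
      (Ch * M) * (ε ^ d * (((Φ ∩ ε⁻¹ • A) \ I ε).ncard : ℝ))) (𝓝[>] (0:ℝ)) (𝓝 0) := by
    have := hiii.const_mul (Ch * M)
    simpa using this
  have hg : Tendsto (fun ε : ℝ => C * ((L:ℝ) * C₂) * ε
      + (Ch * M) * (ε ^ d * (((Φ ∩ ε⁻¹ • A) \ I ε).ncard : ℝ))) (𝓝[>] (0:ℝ)) (𝓝 0) := by
    have := hg1.add hg2
    simpa using this
  have hST : Tendsto (fun ε => S ε - T ε) (𝓝[>] (0:ℝ)) (𝓝 0) :=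
    squeeze_zero_norm' hbound hg
  have hfinal := hST.add hT
  rw [zero_add] at hfinal
  exact hfinal.congr (fun ε => by ring)
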